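/- Let β > 0 and Δ > 0. The integral over ℝ of the difference between the majorant m⁺(x) = (β/(β² + x²))·(e^{2πβΔ} + e^{−2πβΔ} − 2cos(2πΔx))/(e^{πβΔ} − e^{−πβΔ})² and the Poisson kernel h_β(x) = β/(β² + x²) equals 2π e^{−2πβΔ}/(1 − e^{−2πβΔ}). -/

import Mathlib

open Real MeasureTheory

open Set Filter

open scoped FourierTransform

private lemma integrableOn_cexp_Ioi {c : ℂ} (hc : c.re < 0) :
    IntegrableOn (fun x : ℝ ↦ Complex.exp (c * x)) (Ioi 0) := by
  refine (exp_neg_integrableOn_Ioi 0 (neg_pos.mpr hc)).mono'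
    (Continuous.aestronglyMeasurable (by fun_prop)) ?_
  filter_upwards with x
  simp [Complex.norm_exp, Complex.mul_re]

private lemma integral_cexp_Ioi {c : ℂ} (hc : c.re < 0) :
    ∫ x in Ioi (0:ℝ), Complex.exp (c * x) = -c⁻¹ := by
  have hc0 : c ≠ 0 := fun h ↦ by simp [h] at hc
  have h1 := intervalIntegral_tendsto_integral_Ioi 0 (integrableOn_cexp_Ioi hc) tendsto_id
  have hexp : Tendsto (fun b : ℝ ↦ Complex.exp (c * b)) atTop (nhds 0) := by
    rw [tendsto_zero_iff_norm_tendsto_zero]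
    have h3 : Tendsto (fun b : ℝ ↦ rexp (c.re * b)) atTop (nhds 0) :=
      Real.tendsto_exp_atBot.comp ((tendsto_const_mul_atBot_of_neg hc).2 tendsto_id)
    simpa [Complex.norm_exp, Complex.mul_re] using h3
  have h2 : Tendsto (fun b : ℝ ↦ ∫ x in (0:ℝ)..b, Complex.exp (c * x)) atTop (nhds (-c⁻¹)) := by
    have := (hexp.sub (tendsto_const_nhds (x := (1:ℂ)))).div_const c
    simp only [integral_exp_mul_complex hc0, Complex.ofReal_zero, mul_zero, Complex.exp_zero]
    convert this using 2
    simp [div_eq_mul_inv]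
  exact tendsto_nhds_unique h1 h2

private lemma integrable_exp_neg_abs {a : ℝ} (ha : 0 < a) :
    Integrable (fun x : ℝ ↦ rexp (-(a * |x|))) := by
  have hIoi : IntegrableOn (fun x : ℝ ↦ rexp (-(a * |x|))) (Ioi 0) := by
    refine (exp_neg_integrableOn_Ioi 0 ha).congr_fun ?_ measurableSet_Ioi
    intro x hx
    simp only [abs_of_pos (mem_Ioi.1 hx), neg_mul]
  have hIic : IntegrableOn (fun x : ℝ ↦ rexp (-(a * |x|))) (Iic 0) := by
    rw [← (Measure.measurePreserving_neg (volume : Measure ℝ)).integrableOn_comp_preimage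
        (Homeomorph.neg ℝ).measurableEmbedding]
    simp only [Function.comp_def, abs_neg, neg_preimage, neg_Iic, neg_zero]
    rwa [integrableOn_Ici_iff_integrableOn_Ioi]
  have := hIic.union hIoi
  rwa [Iic_union_Ioi, integrableOn_univ] at this


private lemma fourier_exp_neg_abs {a : ℝ} (ha : 0 < a) (ξ : ℝ) :
    𝓕 (fun x : ℝ ↦ ((rexp (-(a * |x|)) : ℝ) : ℂ)) ξ
      = ((2 * a / (a ^ 2 + (2 * π * ξ) ^ 2) : ℝ) : ℂ) := by
  have hint : Integrable (fun v : ℝ ↦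
      Complex.exp (↑(-2 * π * v * ξ) * Complex.I) • ((rexp (-(a * |v|)) : ℝ) : ℂ)) := by
    simp only [smul_eq_mul]
    exact ((integrable_exp_neg_abs ha).ofReal).bdd_mul
      (Continuous.aestronglyMeasurable (by fun_prop))
      (c := 1) (Eventually.of_forall fun x ↦ le_of_eq (Complex.norm_exp_ofReal_mul_I _))
  have h1 : ((-(a : ℂ)) - (2 * π * ξ) * Complex.I) ≠ 0 := by
    intro h
    have := congrArg Complex.re h
    simp at this
    linarith
  have h2 : ((-(a : ℂ)) + (2 * π * ξ) * Complex.I) ≠ 0 := by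
    intro h
    have := congrArg Complex.re h
    simp at this
    linarith
  rw [Real.fourier_real_eq_integral_exp_smul,
    ← integral_add_compl (measurableSet_Ioi (a := (0:ℝ))) hint, compl_Ioi]
  have hIoi : (∫ v in Ioi (0:ℝ), Complex.exp (↑(-2 * π * v * ξ) * Complex.I) •
      ((rexp (-(a * |v|)) : ℝ) : ℂ)) = -((-(a:ℂ) - (2 * π * ξ) * Complex.I))⁻¹ := by
    rw [← integral_cexp_Ioi (c := -(a:ℂ) - (2 * π * ξ) * Complex.I) (by simpa using ha)]
    refine setIntegral_congr_fun measurableSet_Ioi fun x hx ↦ ?_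
    rw [abs_of_pos (mem_Ioi.1 hx), smul_eq_mul, Complex.ofReal_exp, ← Complex.exp_add]
    congr 1
    push_cast
    ring
  have hIic : (∫ v in Iic (0:ℝ), Complex.exp (↑(-2 * π * v * ξ) * Complex.I) •
      ((rexp (-(a * |v|)) : ℝ) : ℂ)) = -((-(a:ℂ) + (2 * π * ξ) * Complex.I))⁻¹ := by
    have heq := integral_comp_neg_Iic (0:ℝ)
      (fun v ↦ Complex.exp (↑(-2 * π * (-v) * ξ) * Complex.I) • ((rexp (-(a * |(-v)|)) : ℝ) : ℂ))
    simp only [neg_neg, neg_zero] at heq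
    rw [heq, ← integral_cexp_Ioi (c := -(a:ℂ) + (2 * π * ξ) * Complex.I) (by simpa using ha)]
    refine setIntegral_congr_fun measurableSet_Ioi fun x hx ↦ ?_
    rw [abs_neg, abs_of_pos (mem_Ioi.1 hx), smul_eq_mul, Complex.ofReal_exp, ← Complex.exp_add]
    congr 1
    push_cast
    ring
  rw [hIoi, hIic]
  have hd : ((a:ℂ) ^ 2 + (2 * (π:ℂ) * ξ) ^ 2) ≠ 0 := by
    have he : ((a:ℂ) ^ 2 + (2 * (π:ℂ) * ξ) ^ 2) = ((a ^ 2 + (2 * π * ξ) ^ 2 : ℝ) : ℂ) := by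
      push_cast; ring
    rw [he]
    exact_mod_cast (by positivity : (a ^ 2 + (2 * π * ξ) ^ 2 : ℝ) ≠ 0)
  push_cast
  field_simp
  ring_nf
  simp only [Complex.I_sq]
  have hd' : (a:ℂ) ^ 2 + (π:ℂ) ^ 2 * ξ ^ 2 * 4 ≠ 0 := by convert hd using 1; ring
  field_simp
  ring

private lemma integrable_poisson {b : ℝ} (hb : 0 < b) :
    Integrable (fun x : ℝ ↦ b / (b ^ 2 + x ^ 2)) := by
  have h := (integrable_inv_one_add_sq.comp_div hb.ne').const_mul b⁻¹
  refine h.congr (Eventually.of_forall fun x ↦ ?_)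
  have h1 : (0:ℝ) < b ^ 2 + x ^ 2 := by positivity
  field_simp

private lemma integral_poisson {b : ℝ} (hb : 0 < b) :
    ∫ x : ℝ, b / (b ^ 2 + x ^ 2) = π := by
  have h0 : (fun x : ℝ ↦ b / (b ^ 2 + x ^ 2)) = fun x : ℝ ↦ b⁻¹ * (1 + (x / b) ^ 2)⁻¹ := by
    funext x
    have h1 : (0:ℝ) < b ^ 2 + x ^ 2 := by positivity
    field_simp
  rw [h0, integral_const_mul,
    MeasureTheory.Measure.integral_comp_div (fun y ↦ (1 + y ^ 2)⁻¹) b,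
    integral_univ_inv_one_add_sq, abs_of_pos hb, smul_eq_mul]
  field_simp

private lemma poisson_cos {β Δ : ℝ} (hβ : 0 < β) (hΔ : 0 < Δ) :
    ∫ x : ℝ, β / (β ^ 2 + x ^ 2) * Real.cos (2 * π * Δ * x)
      = π * rexp (-(2 * π * β * Δ)) := by
  have ha : 0 < 2 * π * β := by positivity
  set a : ℝ := 2 * π * β with ha_def
  set f : ℝ → ℂ := fun x ↦ ((rexp (-(a * |x|)) : ℝ) : ℂ) with hf_def
  have hf_int : Integrable f := (integrable_exp_neg_abs ha).ofReal
  have hg_int : Integrable (fun ξ : ℝ ↦ (2 * a / (a ^ 2 + (2 * π * ξ) ^ 2) : ℝ)) := by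
    have h := ((integrable_poisson hβ).const_mul π⁻¹)
    refine h.congr (Eventually.of_forall fun x ↦ ?_)
    have hπ := pi_pos
    have h1 : (0:ℝ) < β ^ 2 + x ^ 2 := by positivity
    rw [ha_def]
    field_simp
  have hFT : 𝓕 f = fun ξ : ℝ ↦ ((2 * a / (a ^ 2 + (2 * π * ξ) ^ 2) : ℝ) : ℂ) :=
    funext fun ξ ↦ fourier_exp_neg_abs ha ξ
  have hFT_int : Integrable (𝓕 f) := by rw [hFT]; exact hg_int.ofReal
  have hcont : Continuous f := by fun_prop
  have hinv := hf_int.fourierInv_fourier_eq hFT_int (hcont.continuousAt (x := Δ))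
  rw [hFT, fourierInv_eq_fourier_neg,
    Real.fourier_real_eq_integral_exp_smul] at hinv
  have hint2 : Integrable (fun v : ℝ ↦ Complex.exp (↑(-2 * π * v * -Δ) * Complex.I) •
      ((2 * a / (a ^ 2 + (2 * π * v) ^ 2) : ℝ) : ℂ)) := by
    simp only [smul_eq_mul]
    exact hg_int.ofReal.bdd_mul (Continuous.aestronglyMeasurable (by fun_prop))
      (c := 1) (Eventually.of_forall fun x ↦ le_of_eq (Complex.norm_exp_ofReal_mul_I _))
  have hre := congrArg Complex.re hinv
  simp only [← RCLike.re_eq_complex_re] at hre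
  rw [← integral_re hint2] at hre
  simp only [RCLike.re_eq_complex_re] at hre
  have hpt : ∀ v : ℝ, (Complex.exp (↑(-2 * π * v * -Δ) * Complex.I) •
      ((2 * a / (a ^ 2 + (2 * π * v) ^ 2) : ℝ) : ℂ)).re
      = (2 * a / (a ^ 2 + (2 * π * v) ^ 2)) * Real.cos (2 * π * Δ * v) := by
    intro v
    rw [smul_eq_mul, show (-2 * π * v * -Δ : ℝ) = 2 * π * Δ * v by ring,
      Complex.mul_re, Complex.exp_ofReal_mul_I_re, Complex.ofReal_re, Complex.ofReal_im,
      mul_zero, sub_zero]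
    ring
  have hfΔ : (f Δ).re = rexp (-(a * Δ)) := by
    simp only [hf_def, abs_of_pos hΔ, Complex.ofReal_re]
  simp only [hpt, hfΔ] at hre
  have := congrArg (fun t : ℝ ↦ π * t) hre
  rw [← integral_const_mul] at this
  have hfin : (fun v : ℝ ↦ π * (2 * a / (a ^ 2 + (2 * π * v) ^ 2) * Real.cos (2 * π * Δ * v)))
      = fun v : ℝ ↦ β / (β ^ 2 + v ^ 2) * Real.cos (2 * π * Δ * v) := by
    funext v
    have hπ := pi_pos
    have h1 : (0:ℝ) < β ^ 2 + v ^ 2 := by positivity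
    rw [ha_def]
    field_simp
  rw [hfin] at this
  exact this

theorem integral_majorant_sub_poisson (β Δ : ℝ) (hβ : 0 < β) (hΔ : 0 < Δ) :
    ∫ x : ℝ,
        ((β / (β ^ 2 + x ^ 2)) *
            ((Real.exp (2 * π * β * Δ) + Real.exp (-2 * π * β * Δ) -
                2 * Real.cos (2 * π * Δ * x)) /
              (Real.exp (π * β * Δ) - Real.exp (-(π * β * Δ))) ^ 2) -
          β / (β ^ 2 + x ^ 2)) =
      2 * π * Real.exp (-2 * π * β * Δ) / (1 - Real.exp (-2 * π * β * Δ)) := by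
  have hπ := pi_pos
  set P := rexp (2 * π * β * Δ) with hP_def
  set E := rexp (-2 * π * β * Δ) with hE_def
  have hPE : P * E = 1 := by
    rw [hP_def, hE_def, ← Real.exp_add, show 2 * π * β * Δ + -2 * π * β * Δ = 0 by ring,
      Real.exp_zero]
  have hE1 : E < 1 := by
    rw [hE_def]
    have h0 : (0:ℝ) < 2 * π * β * Δ := by positivity
    simpa using Real.exp_lt_exp.2 (show -2 * π * β * Δ < 0 by linarith)
  have hEpos : 0 < E := Real.exp_pos _
  set D := (rexp (π * β * Δ) - rexp (-(π * β * Δ))) ^ 2 with hD_def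
  have hD_eq : D = P + E - 2 := by
    have e1 : rexp (π * β * Δ) ^ 2 = P := by
      rw [pow_two, ← Real.exp_add, hP_def]
      congr 1
      ring
    have e2 : rexp (-(π * β * Δ)) ^ 2 = E := by
      rw [pow_two, ← Real.exp_add, hE_def]
      congr 1
      ring
    have e3 : rexp (π * β * Δ) * rexp (-(π * β * Δ)) = 1 := by
      rw [← Real.exp_add, show π * β * Δ + -(π * β * Δ) = 0 by ring, Real.exp_zero]
    rw [hD_def, sub_sq]
    linear_combination e1 + e2 - 2 * e3
  have hD_pos : 0 < D := by
    have h0 : (0:ℝ) < π * β * Δ := by positivity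
    have h := Real.exp_lt_exp.2 (show -(π * β * Δ) < π * β * Δ by linarith)
    rw [hD_def]
    exact pow_pos (sub_pos.2 h) 2
  have hint_cos : Integrable (fun x : ℝ ↦ β / (β ^ 2 + x ^ 2) * Real.cos (2 * π * Δ * x)) := by
    have h := (integrable_poisson hβ).bdd_mul
      (Continuous.aestronglyMeasurable
        (by fun_prop : Continuous fun x : ℝ ↦ Real.cos (2 * π * Δ * x)))
      (c := 1) (Eventually.of_forall fun x ↦ by simpa using Real.abs_cos_le_one (2 * π * Δ * x))
    exact h.congr (Filter.Eventually.of_forall fun x ↦ mul_comm _ _)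
  have hpt : ∀ x : ℝ,
      (β / (β ^ 2 + x ^ 2) * ((P + E - 2 * Real.cos (2 * π * Δ * x)) / D) - β / (β ^ 2 + x ^ 2))
      = (2 / D) * (β / (β ^ 2 + x ^ 2))
        - (2 / D) * (β / (β ^ 2 + x ^ 2) * Real.cos (2 * π * Δ * x)) := by
    intro x
    have h1 : (0:ℝ) < β ^ 2 + x ^ 2 := by positivity
    rw [hD_eq]
    have h2 : P + E - 2 ≠ 0 := by rw [← hD_eq]; exact hD_pos.ne'
    field_simp
    ring
  simp only [hpt]
  rw [integral_sub ((integrable_poisson hβ).const_mul _) (hint_cos.const_mul _),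
    integral_const_mul, integral_const_mul, integral_poisson hβ, poisson_cos hβ hΔ]
  have hE' : rexp (-(2 * π * β * Δ)) = E := by rw [hE_def]; ring_nf
  rw [hE', hD_eq]
  have h1E : 1 - E ≠ 0 := by linarith
  have h2 : P + E - 2 ≠ 0 := by rw [← hD_eq]; exact hD_pos.ne'
  field_simp
  linear_combination (-1) * hPE
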